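/- Suppose the weights a_0,…,a_{n+1} are pairwise distinct. Then every finite subgroup of Aut(S), the group of graded automorphisms of the weighted polynomial ring S, is abelian. -/

import Mathlib

open MvPolynomial

noncomputable section

/-- The predicate that an algebra automorphism of `ℂ[x_0,…,x_{n+1}]` is graded with
respect to the weights `a`, i.e. preserves all weighted-homogeneous pieces. -/
def IsGradedAut {n : ℕ} (a : Fin (n + 2) → ℕ)
    (φ : MvPolynomial (Fin (n + 2)) ℂ ≃ₐ[ℂ] MvPolynomial (Fin (n + 2)) ℂ) : Prop :=
  ∀ (d : ℕ) (f : MvPolynomial (Fin (n + 2)) ℂ),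
    f.IsWeightedHomogeneous a d ↔ (φ f).IsWeightedHomogeneous a d

lemma IsGradedAut.one {n : ℕ} (a : Fin (n + 2) → ℕ) : IsGradedAut a 1 := by
  intro d f
  rfl

lemma IsGradedAut.mul {n : ℕ} {a : Fin (n + 2) → ℕ}
    {φ ψ : MvPolynomial (Fin (n + 2)) ℂ ≃ₐ[ℂ] MvPolynomial (Fin (n + 2)) ℂ}
    (hφ : IsGradedAut a φ) (hψ : IsGradedAut a ψ) : IsGradedAut a (φ * ψ) := by
  intro d f
  rw [AlgEquiv.mul_apply]
  exact (hψ d f).trans (hφ d (ψ f))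

lemma IsGradedAut.inv {n : ℕ} {a : Fin (n + 2) → ℕ}
    {φ : MvPolynomial (Fin (n + 2)) ℂ ≃ₐ[ℂ] MvPolynomial (Fin (n + 2)) ℂ}
    (hφ : IsGradedAut a φ) : IsGradedAut a φ⁻¹ := by
  intro d f
  have h := hφ d (φ⁻¹ f)
  rw [show φ (φ⁻¹ f) = f from φ.apply_symm_apply f] at h
  exact h.symm

/-- The group of graded automorphisms `Aut(S)`. -/
def gradedAut {n : ℕ} (a : Fin (n + 2) → ℕ) :
    Subgroup (MvPolynomial (Fin (n + 2)) ℂ ≃ₐ[ℂ] MvPolynomial (Fin (n + 2)) ℂ) where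
  carrier := {φ | IsGradedAut a φ}
  one_mem' := IsGradedAut.one a
  mul_mem' hφ hψ := hφ.mul hψ
  inv_mem' hφ := hφ.inv



section Aux
variable {σ : Type*} [DecidableEq σ]

lemma coeff_single_one_mul (i : σ) (p q : MvPolynomial σ ℂ) :
    coeff (Finsupp.single i 1) (p * q) =
      coeff 0 p * coeff (Finsupp.single i 1) q + coeff (Finsupp.single i 1) p * coeff 0 q := by
  rw [coeff_mul, Finsupp.antidiagonal_single, Finset.sum_map]
  rw [show Finset.HasAntidiagonal.antidiagonal (1:ℕ) = {(0,1),(1,0)} from rfl]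
  simp [add_comm]

lemma coeff_zero_mul' (p q : MvPolynomial σ ℂ) :
    coeff 0 (p * q) = coeff 0 p * coeff 0 q := by
  rw [coeff_mul]; simp

lemma weight_single_nat (a : σ → ℕ) (i : σ) (k : ℕ) :
    Finsupp.weight a (Finsupp.single i k) = k * a i := by
  rw [Finsupp.weight_apply, Finsupp.sum_single_index] <;> simp

/-- coefficients of a weighted homogeneous polynomial of degree `d ≠ 0, a i` vanish at 0 and x_i -/
lemma coeffs_vanish {a : σ → ℕ} {p : MvPolynomial σ ℂ} {d : ℕ}
    (hp : p.IsWeightedHomogeneous a d) (i : σ) (h0 : d ≠ 0) (hi : d ≠ a i) :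
    coeff 0 p = 0 ∧ coeff (Finsupp.single i 1) p = 0 := by
  constructor
  · exact hp.coeff_eq_zero 0 (by simp [Ne.symm h0])
  · exact hp.coeff_eq_zero _ (by rw [weight_single_nat]; simpa using Ne.symm hi)

set_option linter.unusedSectionVars false

lemma support_structure {a : σ → ℕ} (ha : ∀ i, 0 < a i)
    (hdist : Function.Injective a) {i : σ} {m : σ →₀ ℕ}
    (hm : Finsupp.weight a m = a i) (hne : m ≠ Finsupp.single i 1)
    {j : σ} (hj : m j ≠ 0) : j ≠ i ∧ a j < a i := by
  classical
  have hi : m i = 0 := by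
    by_contra hmi
    have hdec : m = Finsupp.single i (m i) + Finsupp.erase i m := by
      ext k
      by_cases h : k = i
      · subst h; simp
      · rw [Finsupp.add_apply, Finsupp.single_apply, if_neg (fun hh => h hh.symm),
          Finsupp.erase_ne h, zero_add]
    have hw : m i * a i + Finsupp.weight a (Finsupp.erase i m) = a i := by
      have h2 := congrArg (Finsupp.weight a) hdec
      rw [map_add, weight_single_nat] at h2
      omega
    have h1 : m i = 1 := by nlinarith [ha i, Nat.one_le_iff_ne_zero.mpr hmi]
    have h2 : Finsupp.weight a (Finsupp.erase i m) = 0 := by nlinarith [ha i]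
    have h3 : Finsupp.erase i m = 0 := by
      ext k
      by_contra hk
      have h4 := Finsupp.le_weight_of_ne_zero (w := a) (fun s => Nat.zero_le _) hk
      have := ha k
      simp only [Finsupp.coe_zero, Pi.zero_apply] at hk
      omega
    apply hne
    rw [hdec, h3, add_zero, h1]
  have hji : j ≠ i := by rintro rfl; exact hj hi
  have hle : a j ≤ a i := by
    have := Finsupp.le_weight_of_ne_zero (w := a) (fun s => Nat.zero_le _) hj
    omega
  exact ⟨hji, lt_of_le_of_ne hle (fun h => hji (hdist h))⟩

/-- structure of the "remainder" of a weighted homogeneous polynomial of degree `a i`. -/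
lemma decomp {a : σ → ℕ} (ha : ∀ i, 0 < a i) (hdist : Function.Injective a)
    {i : σ} {p : MvPolynomial σ ℂ} (hp : p.IsWeightedHomogeneous a (a i)) :
    ∀ m ∈ (p - C (coeff (Finsupp.single i 1) p) * X i).support,
      m ≠ 0 ∧ ∀ j, m j ≠ 0 → j ≠ i ∧ a j < a i := by
  intro m hm
  rw [mem_support_iff] at hm
  have hXi : ∀ m' : σ →₀ ℕ, coeff m' (C (coeff (Finsupp.single i 1) p) * X i)
      = if Finsupp.single i 1 = m' then coeff (Finsupp.single i 1) p else 0 := by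
    intro m'
    rw [coeff_C_mul, coeff_X']
    split <;> simp
  have hne : m ≠ Finsupp.single i 1 := by
    rintro rfl
    rw [coeff_sub, hXi, if_pos rfl, sub_self] at hm
    exact hm rfl
  have hcm : coeff m p ≠ 0 := by
    rw [coeff_sub, hXi, if_neg (Ne.symm hne), sub_zero] at hm
    exact hm
  have hw : Finsupp.weight a m = a i := hp hcm
  refine ⟨?_, fun j hj => support_structure ha hdist hw hne hj⟩
  rintro rfl
  rw [map_zero] at hw
  exact (ha i).ne' hw.symm

/-- The remainder lies in the ideal generated by the other variables. -/
lemma decomp_mem_span {a : σ → ℕ} (ha : ∀ i, 0 < a i) (hdist : Function.Injective a)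
    {i : σ} {p : MvPolynomial σ ℂ} (hp : p.IsWeightedHomogeneous a (a i)) :
    p - C (coeff (Finsupp.single i 1) p) * X i ∈
      Ideal.span (X '' {j | j ≠ i} : Set (MvPolynomial σ ℂ)) := by
  rw [mem_ideal_span_X_image]
  intro m hm
  obtain ⟨hm0, hstr⟩ := decomp ha hdist hp m hm
  obtain ⟨j, hj⟩ := Finsupp.ne_iff.mp hm0
  simp only [Finsupp.coe_zero, Pi.zero_apply] at hj
  exact ⟨j, (hstr j hj).1, hj⟩

variable {a : σ → ℕ}

/-- The diagonal coefficient of a graded automorphism on the variable `X i`. -/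
def cc (φ : MvPolynomial σ ℂ ≃ₐ[ℂ] MvPolynomial σ ℂ) (i : σ) : ℂ :=
  coeff (Finsupp.single i 1) (φ (X i))

lemma cc_one (i : σ) : cc (1 : MvPolynomial σ ℂ ≃ₐ[ℂ] MvPolynomial σ ℂ) i = 1 := by
  simp [cc, coeff_X]

lemma graded_image_X {φ : MvPolynomial σ ℂ ≃ₐ[ℂ] MvPolynomial σ ℂ}
    (hφ : ∀ d f, f.IsWeightedHomogeneous a d ↔ (φ f).IsWeightedHomogeneous a d) (j : σ) :
    (φ (X j)).IsWeightedHomogeneous a (a j) :=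
  (hφ (a j) (X j)).mp (isWeightedHomogeneous_X ℂ a j)

lemma span_image_vanish (ha : ∀ i, 0 < a i) (hdist : Function.Injective a)
    {φ : MvPolynomial σ ℂ ≃ₐ[ℂ] MvPolynomial σ ℂ}
    (hφ : ∀ d f, f.IsWeightedHomogeneous a d ↔ (φ f).IsWeightedHomogeneous a d) (i : σ)
    {q : MvPolynomial σ ℂ} (hq : q ∈ Ideal.span (X '' {j | j ≠ i} : Set (MvPolynomial σ ℂ))) :
    coeff 0 (φ q) = 0 ∧ coeff (Finsupp.single i 1) (φ q) = 0 := by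
  refine Submodule.span_induction ?_ ?_ ?_ ?_ hq
  · rintro x ⟨j, hj, rfl⟩
    have hhom := graded_image_X hφ j
    exact coeffs_vanish hhom i (ha j).ne' (fun h => hj (hdist h))
  · simp
  · intro x y _ _ hx hy
    rw [map_add, coeff_add, coeff_add, hx.1, hx.2, hy.1, hy.2]
    simp
  · intro c x _ hx
    rw [smul_eq_mul, map_mul, coeff_zero_mul', coeff_single_one_mul, hx.1, hx.2]
    simp

lemma cc_mul (ha : ∀ i, 0 < a i) (hdist : Function.Injective a)
    {φ ψ : MvPolynomial σ ℂ ≃ₐ[ℂ] MvPolynomial σ ℂ}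
    (hφ : ∀ d f, f.IsWeightedHomogeneous a d ↔ (φ f).IsWeightedHomogeneous a d)
    (hψ : ∀ d f, f.IsWeightedHomogeneous a d ↔ (ψ f).IsWeightedHomogeneous a d) (i : σ) :
    cc (φ * ψ) i = cc φ i * cc ψ i := by
  have hhom : (ψ (X i)).IsWeightedHomogeneous a (a i) := graded_image_X hψ i
  set c : ℂ := cc ψ i with hc
  set r : MvPolynomial σ ℂ := ψ (X i) - C c * X i with hr
  have hsplit : ψ (X i) = c • X i + r := by
    rw [hr]; rw [smul_eq_C_mul]; ring
  have hrmem : r ∈ Ideal.span (X '' {j | j ≠ i} : Set (MvPolynomial σ ℂ)) :=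
    decomp_mem_span ha hdist hhom
  have hvan := span_image_vanish ha hdist hφ i hrmem
  rw [cc, AlgEquiv.mul_apply, hsplit, map_add, map_smul, coeff_add, coeff_smul, hvan.2]
  rw [add_zero, smul_eq_mul, mul_comm]
  rfl

lemma eq_one_of_cc_one (ha : ∀ i, 0 < a i) (hdist : Function.Injective a)
    {g : MvPolynomial σ ℂ ≃ₐ[ℂ] MvPolynomial σ ℂ}
    (hg : ∀ d f, f.IsWeightedHomogeneous a d ↔ (g f).IsWeightedHomogeneous a d)
    (hc : ∀ i, cc g i = 1) (hord : ∃ N, 0 < N ∧ g ^ N = 1) : g = 1 := by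
  have main : ∀ d : ℕ, ∀ i, a i = d → g (X i) = X i := by
    intro d
    induction d using Nat.strong_induction_on with
    | _ d ih =>
      intro i hd
      set r : MvPolynomial σ ℂ := g (X i) - X i with hr
      have hgx : g (X i) = X i + r := by rw [hr]; ring
      have hhom := graded_image_X hg i
      have hr' : r = g (X i) - C (coeff (Finsupp.single i 1) (g (X i))) * X i := by
        have h1 : coeff (Finsupp.single i 1) (g (X i)) = 1 := hc i
        rw [hr, h1, map_one, one_mul]
      have hsupp : ∀ m ∈ r.support, m ≠ 0 ∧ ∀ j, m j ≠ 0 → j ≠ i ∧ a j < a i := by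
        rw [hr']; exact decomp ha hdist hhom
      have hfix : g r = r := by
        conv_lhs => rw [r.as_sum]
        rw [map_sum]
        conv_rhs => rw [r.as_sum]
        refine Finset.sum_congr rfl fun m hm => ?_
        obtain ⟨-, hstr⟩ := hsupp m hm
        rw [monomial_eq, map_mul]
        have hC : g (C (coeff m r)) = C (coeff m r) := by
          have := g.commutes (coeff m r)
          rwa [algebraMap_eq] at this
        rw [hC]
        congr 1
        rw [map_finsuppProd]
        refine Finset.prod_congr rfl fun j hj => ?_
        have hj' : m j ≠ 0 := Finsupp.mem_support_iff.mp hj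
        have hfixj : g (X j) = X j := ih (a j) (hd ▸ (hstr j hj').2) j rfl
        simp only []
        rw [map_pow, hfixj]
      have hfixpow : ∀ k : ℕ, (g ^ k) r = r := by
        intro k
        induction k with
        | zero => rw [pow_zero]; rfl
        | succ k ihk => rw [pow_succ', AlgEquiv.mul_apply, ihk, hfix]
      have hpow : ∀ k : ℕ, (g ^ k) (X i) = X i + k • r := by
        intro k
        induction k with
        | zero => rw [pow_zero, zero_smul, add_zero]; rfl
        | succ k ihk =>
          rw [pow_succ', AlgEquiv.mul_apply, ihk, map_add, map_nsmul, hfix, hgx, succ_nsmul]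
          ring
      obtain ⟨N, hN0, hN⟩ := hord
      have hNX := hpow N
      rw [hN] at hNX
      have hNr : N • r = 0 := by
        have : X i = X i + N • r := hNX
        exact (left_eq_add.mp this)
      have hrz : r = 0 := by
        have h2 : (N : ℂ) • r = 0 := by rw [Nat.cast_smul_eq_nsmul]; exact hNr
        rcases smul_eq_zero.mp h2 with h | h
        · exact absurd (Nat.cast_eq_zero.mp h) hN0.ne'
        · exact h
      rw [hgx, hrz, add_zero]
  have hall : ∀ i, g (X i) = X i := fun i => main (a i) i rfl
  have hAlg : (g : MvPolynomial σ ℂ →ₐ[ℂ] MvPolynomial σ ℂ) = AlgHom.id ℂ _ :=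
    algHom_ext fun j => hall j
  refine AlgEquiv.ext fun p => ?_
  have : (g : MvPolynomial σ ℂ →ₐ[ℂ] MvPolynomial σ ℂ) p = AlgHom.id ℂ _ p := by rw [hAlg]
  simpa using this

end Aux


/-- If the weights `a_0,…,a_{n+1}` are pairwise distinct, every finite
subgroup of the group of graded automorphisms of the weighted polynomial ring is abelian. -/
theorem finite_subgroup_abelian_of_distinct_weights {n : ℕ} (a : Fin (n + 2) → ℕ)
    (ha : ∀ i, 0 < a i) (hdist : Function.Injective a)
    (G : Subgroup (MvPolynomial (Fin (n + 2)) ℂ ≃ₐ[ℂ] MvPolynomial (Fin (n + 2)) ℂ))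
    (hG : ∀ g ∈ G, IsGradedAut a g) (hfin : Finite G) :
    ∀ g ∈ G, ∀ h ∈ G, g * h = h * g := by
  intro g hg h hh
  have hccG : ∀ x ∈ G, ∀ y ∈ G, ∀ i, cc (x * y) i = cc x i * cc y i := by
    intro x hx y hy i
    exact cc_mul ha hdist (hG x hx) (hG y hy) i
  set k := (g * h) * (h * g)⁻¹ with hk
  have hhgG : h * g ∈ G := mul_mem hh hg
  have hghG : g * h ∈ G := mul_mem hg hh
  have hkG : k ∈ G := mul_mem hghG (inv_mem hhgG)
  have hinv : ∀ i, cc (h * g) i * cc (h * g)⁻¹ i = 1 := by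
    intro i
    rw [← hccG _ hhgG _ (inv_mem hhgG) i, mul_inv_cancel, cc_one]
  have hck : ∀ i, cc k i = 1 := by
    intro i
    have e1 : cc k i * cc (h * g) i = cc (g * h) i := by
      rw [← hccG _ hkG _ hhgG i, hk, inv_mul_cancel_right]
    have e2 : cc (g * h) i = cc g i * cc h i := hccG _ hg _ hh i
    have e3 : cc (h * g) i = cc h i * cc g i := hccG _ hh _ hg i
    have hne : cc (h * g) i ≠ 0 := left_ne_zero_of_mul_eq_one (hinv i)
    have : cc k i * cc (h * g) i = 1 * cc (h * g) i := by
      rw [e1, e2, e3, one_mul]; ring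
    exact mul_right_cancel₀ hne this
  have hord : ∃ N, 0 < N ∧ k ^ N = 1 := by
    haveI := hfin
    refine ⟨orderOf (⟨k, hkG⟩ : G), orderOf_pos _, ?_⟩
    have hp := pow_orderOf_eq_one (⟨k, hkG⟩ : G)
    have := congrArg (Subtype.val) hp
    simpa using this
  have hk1 : (g * h) * (h * g)⁻¹ = 1 := eq_one_of_cc_one ha hdist (hG k hkG) hck hord
  exact mul_inv_eq_one.mp hk1

end
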